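/- arXiv:1412.8205 — 2 statements merged into one kernel-verified Lean document; each statement's English description precedes it below -/
import Mathlib

section
/- For every positive integer d, the number of subgroups of the abelian group ℤ × ℤ of index d is σ(d) = ∑_{r ∣ d} r; that is, the set of subgroups H ≤ ℤ × ℤ whose index equals d is finite and has cardinality σ(d). -/
private lemma mem_closure_pair (a b c x y : ℤ) :
    (x, y) ∈ AddSubgroup.closure ({(a, 0), (b, c)} : Set (ℤ × ℤ)) ↔
      ∃ m n : ℤ, m * a + n * b = x ∧ n * c = y := by
  constructor
  · intro h
    rw [show ({(a, 0), (b, c)} : Set (ℤ × ℤ)) = {(a, 0)} ∪ {(b, c)} from rfl,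
      AddSubgroup.closure_union] at h
    rcases AddSubgroup.mem_sup.mp h with ⟨u, hu, v, hv, huv⟩
    rcases AddSubgroup.mem_closure_singleton.mp hu with ⟨m, rfl⟩
    rcases AddSubgroup.mem_closure_singleton.mp hv with ⟨n, rfl⟩
    refine ⟨m, n, ?_, ?_⟩
    · have := congrArg Prod.fst huv
      simpa [Prod.smul_mk, smul_eq_mul] using this
    · have := congrArg Prod.snd huv
      simpa [Prod.smul_mk, smul_eq_mul] using this
  · rintro ⟨m, n, h1, h2⟩
    have hu : ((a : ℤ), (0 : ℤ)) ∈ AddSubgroup.closure ({(a, 0), (b, c)} : Set (ℤ × ℤ)) :=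
      AddSubgroup.subset_closure (by simp)
    have hv : ((b : ℤ), (c : ℤ)) ∈ AddSubgroup.closure ({(a, 0), (b, c)} : Set (ℤ × ℤ)) :=
      AddSubgroup.subset_closure (by simp)
    have hsum := AddSubgroup.add_mem _ (AddSubgroup.zsmul_mem _ hu m) (AddSubgroup.zsmul_mem _ hv n)
    have hxy : (x, y) = m • ((a : ℤ), (0 : ℤ)) + n • ((b : ℤ), (c : ℤ)) := by
      simp [Prod.ext_iff, Prod.smul_mk, smul_eq_mul, ← h1, ← h2]
    rwa [hxy]

private lemma index_closure_pair (a c : ℕ) (b : ℤ) (ha : 0 < a) (hc : 0 < c) :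
    (AddSubgroup.closure ({((a : ℤ), 0), (b, (c : ℤ))} : Set (ℤ × ℤ))).index = a * c := by
  set H := AddSubgroup.closure ({((a : ℤ), 0), (b, (c : ℤ))} : Set (ℤ × ℤ)) with hHdef
  have hanz : (a : ℤ) ≠ 0 := by exact_mod_cast ha.ne'
  have hcnz : (c : ℤ) ≠ 0 := by exact_mod_cast hc.ne'
  let f : Fin a × Fin c → (ℤ × ℤ) ⧸ H := fun p => QuotientAddGroup.mk ((p.1 : ℤ), (p.2 : ℤ))
  have hbij : Function.Bijective f := by
    constructor
    · rintro ⟨i, j⟩ ⟨i', j'⟩ h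
      have hmem : ((-(((i : ℕ) : ℤ), ((j : ℕ) : ℤ)) + (((i' : ℕ) : ℤ), ((j' : ℕ) : ℤ)) : ℤ × ℤ)) ∈ H :=
        QuotientAddGroup.eq.mp h
      have hmem' : ((((i' : ℕ) : ℤ) - ((i : ℕ) : ℤ), ((j' : ℕ) : ℤ) - ((j : ℕ) : ℤ)) : ℤ × ℤ) ∈ H := by
        have he : ((((i' : ℕ) : ℤ) - ((i : ℕ) : ℤ), ((j' : ℕ) : ℤ) - ((j : ℕ) : ℤ)) : ℤ × ℤ)
            = -(((i : ℕ) : ℤ), ((j : ℕ) : ℤ)) + (((i' : ℕ) : ℤ), ((j' : ℕ) : ℤ)) := by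
          simp [Prod.ext_iff, sub_eq_neg_add]
        rw [he]; exact hmem
      rcases (mem_closure_pair _ _ _ _ _).mp hmem' with ⟨m, n, h1, h2⟩
      have hj1 : ((j : ℕ) : ℤ) < c := by exact_mod_cast j.2
      have hj2 : ((j' : ℕ) : ℤ) < c := by exact_mod_cast j'.2
      have hj3 : (0 : ℤ) ≤ ((j : ℕ) : ℤ) := Int.ofNat_nonneg _
      have hj4 : (0 : ℤ) ≤ ((j' : ℕ) : ℤ) := Int.ofNat_nonneg _
      have hn : n = 0 := by
        rcases lt_trichotomy n 0 with hx | hx | hx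
        · nlinarith
        · exact hx
        · nlinarith
      subst hn
      simp only [zero_mul] at h2
      have hi1 : ((i : ℕ) : ℤ) < a := by exact_mod_cast i.2
      have hi2 : ((i' : ℕ) : ℤ) < a := by exact_mod_cast i'.2
      have hi3 : (0 : ℤ) ≤ ((i : ℕ) : ℤ) := Int.ofNat_nonneg _
      have hi4 : (0 : ℤ) ≤ ((i' : ℕ) : ℤ) := Int.ofNat_nonneg _
      simp only [zero_mul, add_zero] at h1
      have hm : m = 0 := by
        rcases lt_trichotomy m 0 with hx | hx | hx
        · nlinarith
        · exact hx
        · nlinarith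
      subst hm
      simp only [zero_mul] at h1
      have : (i : ℕ) = (i' : ℕ) ∧ (j : ℕ) = (j' : ℕ) := by omega
      exact Prod.ext (Fin.ext this.1) (Fin.ext this.2)
    · intro q
      induction q using QuotientAddGroup.induction_on with
      | H p =>
        obtain ⟨x, y⟩ := p
        set n : ℤ := y / c with hn
        set j : ℤ := y % c with hj
        have hj0 : 0 ≤ j := Int.emod_nonneg y hcnz
        have hjc : j < c := Int.emod_lt_of_pos y (by exact_mod_cast hc)
        set t : ℤ := x - n * b with ht
        set m : ℤ := t / a with hm
        set i : ℤ := t % a with hi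
        have hi0 : 0 ≤ i := Int.emod_nonneg t hanz
        have hia : i < a := Int.emod_lt_of_pos t (by exact_mod_cast ha)
        refine ⟨(⟨i.toNat, by omega⟩, ⟨j.toNat, by omega⟩), ?_⟩
        show QuotientAddGroup.mk _ = QuotientAddGroup.mk _
        rw [QuotientAddGroup.eq]
        have key : ((x - i, y - j) : ℤ × ℤ) ∈ H := by
          refine (mem_closure_pair _ _ _ _ _).mpr ⟨m, n, ?_, ?_⟩
          · have h1 := Int.mul_ediv_add_emod t (a : ℤ)
            rw [← hm, ← hi] at h1
            rw [ht] at h1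
            linarith [h1, mul_comm m (a : ℤ)]
          · have h1 := Int.mul_ediv_add_emod y (c : ℤ)
            rw [← hn, ← hj] at h1
            linarith [h1, mul_comm n (c : ℤ)]
        have he : (-(((i.toNat : ℤ)), ((j.toNat : ℤ))) + ((x, y) : ℤ × ℤ))
            = ((x - i, y - j) : ℤ × ℤ) := by
          simp [Prod.ext_iff, sub_eq_neg_add, Int.toNat_of_nonneg hi0, Int.toNat_of_nonneg hj0]
        rw [he]
        exact key
  have hcard := Nat.card_eq_of_bijective f hbij
  rw [AddSubgroup.index_eq_card, ← hcard]
  simp [Nat.card_eq_fintype_card]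

private lemma exists_zsmul_mem (H : AddSubgroup (ℤ × ℤ)) [Finite ((ℤ × ℤ) ⧸ H)] (v : ℤ × ℤ) :
    ∃ k : ℤ, k ≠ 0 ∧ k • v ∈ H := by
  obtain ⟨x, y, hxy, h⟩ := Finite.exists_ne_map_eq_of_infinite
    (fun n : ℤ => (QuotientAddGroup.mk (n • v) : (ℤ × ℤ) ⧸ H))
  refine ⟨y - x, sub_ne_zero.mpr (Ne.symm hxy), ?_⟩
  have h' := QuotientAddGroup.eq.mp h
  have he : -(x • v) + y • v = (y - x) • v := by rw [sub_zsmul]; abel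
  rwa [he] at h'

private lemma exists_params (H : AddSubgroup (ℤ × ℤ)) (hH : H.index ≠ 0) :
    ∃ a c b : ℕ, 0 < a ∧ 0 < c ∧ b < a ∧
      H = AddSubgroup.closure ({((a : ℤ), 0), ((b : ℤ), (c : ℤ))} : Set (ℤ × ℤ)) := by
  have hfin : Finite ((ℤ × ℤ) ⧸ H) := by
    rw [AddSubgroup.index_eq_card] at hH
    exact (Nat.card_ne_zero.mp hH).2
  obtain ⟨k1, hk1, hk1H⟩ := exists_zsmul_mem H ((1 : ℤ), (0 : ℤ))
  have hk1H' : ((k1, 0) : ℤ × ℤ) ∈ H := by simpa [Prod.smul_mk] using hk1H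
  obtain ⟨k2, hk2, hk2H⟩ := exists_zsmul_mem H ((0 : ℤ), (1 : ℤ))
  have hk2H' : ((0, k2) : ℤ × ℤ) ∈ H := by simpa [Prod.smul_mk] using hk2H
  set A : AddSubgroup ℤ := H.comap (AddMonoidHom.inl ℤ ℤ) with hAdef
  have hAmem : ∀ x : ℤ, x ∈ A ↔ ((x, 0) : ℤ × ℤ) ∈ H := fun x => Iff.rfl
  obtain ⟨g, hg⟩ := Int.subgroup_cyclic A
  have hAdvd : ∀ x : ℤ, x ∈ A ↔ g ∣ x := by
    intro x
    rw [hg, AddSubgroup.mem_closure_singleton]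
    constructor
    · rintro ⟨n, rfl⟩; exact ⟨n, by rw [smul_eq_mul, mul_comm]⟩
    · rintro ⟨n, rfl⟩; exact ⟨n, by rw [smul_eq_mul, mul_comm]⟩
  have hgne : g ≠ 0 := by
    rintro rfl
    have := (hAdvd k1).mp ((hAmem k1).mpr hk1H')
    simp at this
    exact hk1 this
  set a : ℕ := g.natAbs with hadef
  have ha : 0 < a := Int.natAbs_pos.mpr hgne
  have hAa : ∀ x : ℤ, ((x, 0) : ℤ × ℤ) ∈ H ↔ (a : ℤ) ∣ x := by
    intro x
    rw [← hAmem, hAdvd, hadef, Int.natAbs_dvd]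
  set C : AddSubgroup ℤ := H.map (AddMonoidHom.snd ℤ ℤ) with hCdef
  obtain ⟨h0, hh0⟩ := Int.subgroup_cyclic C
  have hCdvd : ∀ y : ℤ, y ∈ C ↔ h0 ∣ y := by
    intro y
    rw [hh0, AddSubgroup.mem_closure_singleton]
    constructor
    · rintro ⟨n, rfl⟩; exact ⟨n, by rw [smul_eq_mul, mul_comm]⟩
    · rintro ⟨n, rfl⟩; exact ⟨n, by rw [smul_eq_mul, mul_comm]⟩
  have hk2C : k2 ∈ C := ⟨(0, k2), hk2H', rfl⟩
  have hh0ne : h0 ≠ 0 := by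
    rintro rfl
    have := (hCdvd k2).mp hk2C
    simp at this
    exact hk2 this
  set c : ℕ := h0.natAbs with hcdef
  have hc : 0 < c := Int.natAbs_pos.mpr hh0ne
  have hcC : (c : ℤ) ∈ C := by
    rw [hCdvd, hcdef]
    exact Int.dvd_natAbs.mpr dvd_rfl
  obtain ⟨⟨b0, c2⟩, hb0, hc2⟩ := hcC
  have hc2' : c2 = (c : ℤ) := hc2
  subst hc2'
  have hb0H : ((b0, (c : ℤ)) : ℤ × ℤ) ∈ H := hb0
  set b : ℤ := b0 % a with hb
  have hb0' : 0 ≤ b := Int.emod_nonneg b0 (by exact_mod_cast ha.ne')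
  have hba : b < a := Int.emod_lt_of_pos b0 (by exact_mod_cast ha)
  have hsub : ((b0 - b, 0) : ℤ × ℤ) ∈ H := by
    rw [hAa]
    have := Int.mul_ediv_add_emod b0 (a : ℤ)
    exact ⟨b0 / a, by omega⟩
  have hbcH : ((b, (c : ℤ)) : ℤ × ℤ) ∈ H := by
    have := AddSubgroup.sub_mem H hb0H hsub
    simpa using this
  refine ⟨a, c, b.toNat, ha, hc, by omega, ?_⟩
  have hbt : ((b.toNat : ℤ)) = b := Int.toNat_of_nonneg hb0'
  apply le_antisymm
  · rintro ⟨x, y⟩ hxy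
    have hyC : y ∈ C := ⟨(x, y), hxy, rfl⟩
    have hcy : (c : ℤ) ∣ y := by
      rw [hCdvd] at hyC
      exact Int.natAbs_dvd.mpr hyC
    obtain ⟨n, rfl⟩ := hcy
    have hx0 : ((x - n * b, 0) : ℤ × ℤ) ∈ H := by
      have hnmem : ((n * b, n * (c : ℤ)) : ℤ × ℤ) ∈ H := by
        have := AddSubgroup.zsmul_mem H hbcH n
        simpa [Prod.smul_mk, smul_eq_mul] using this
      have := AddSubgroup.sub_mem H hxy hnmem
      have he : (((x, (c : ℤ) * n) : ℤ × ℤ) - (n * b, n * (c : ℤ))) = ((x - n * b, 0) : ℤ × ℤ) := by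
        simp [Prod.ext_iff, Prod.mk_sub_mk, mul_comm]
      rwa [he] at this
    rw [hAa] at hx0
    obtain ⟨m, hm⟩ := hx0
    rw [hbt]
    refine (mem_closure_pair _ _ _ _ _).mpr ⟨m, n, ?_, by ring⟩
    have : m * (a : ℤ) = x - n * b := by rw [mul_comm]; omega
    omega
  · rw [AddSubgroup.closure_le]
    rintro p (rfl | hp)
    · show (((a : ℤ), 0) : ℤ × ℤ) ∈ H
      rw [hAa]
    · rw [Set.mem_singleton_iff] at hp
      subst hp
      show (((b.toNat : ℤ), (c : ℤ)) : ℤ × ℤ) ∈ H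
      rwa [hbt]

private lemma params_unique (a c b a' c' b' : ℕ) (ha : 0 < a) (hc : 0 < c) (hb : b < a)
    (ha' : 0 < a') (hc' : 0 < c') (hb' : b' < a')
    (h : AddSubgroup.closure ({((a : ℤ), 0), ((b : ℤ), (c : ℤ))} : Set (ℤ × ℤ)) =
      AddSubgroup.closure ({((a' : ℤ), 0), ((b' : ℤ), (c' : ℤ))} : Set (ℤ × ℤ))) :
    a = a' ∧ c = c' ∧ b = b' := by
  have hmem : ∀ x y : ℤ,
      (x, y) ∈ AddSubgroup.closure ({((a : ℤ), 0), ((b : ℤ), (c : ℤ))} : Set (ℤ × ℤ)) ↔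
      (x, y) ∈ AddSubgroup.closure ({((a' : ℤ), 0), ((b' : ℤ), (c' : ℤ))} : Set (ℤ × ℤ)) := by
    intro x y; rw [h]
  have hdvd : ∀ (u v w u' v' w' : ℕ), 0 < u' → 0 < w' →
      (((u : ℤ), 0) ∈ AddSubgroup.closure
        ({((u' : ℤ), 0), ((v' : ℤ), (w' : ℤ))} : Set (ℤ × ℤ))) → u' ∣ u := by
    intro u v w u' v' w' hu' hw' hmm
    rcases (mem_closure_pair _ _ _ _ _).mp hmm with ⟨m, n, h1, h2⟩
    have hwnz : (w' : ℤ) ≠ 0 := by exact_mod_cast hw'.ne'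
    have hn : n = 0 := by
      rcases mul_eq_zero.mp h2 with hx | hx
      · exact hx
      · exact absurd hx hwnz
    subst hn
    simp only [zero_mul, add_zero] at h1
    have : (u' : ℤ) ∣ (u : ℤ) := ⟨m, by rw [mul_comm]; omega⟩
    exact_mod_cast this
  have haa' : a' ∣ a := hdvd a b c a' b' c' ha' hc' ((hmem _ _).mp
    ((mem_closure_pair _ _ _ _ _).mpr ⟨1, 0, by ring, by ring⟩))
  have ha'a : a ∣ a' := hdvd a' b' c' a b c ha hc ((hmem _ _).mpr
    ((mem_closure_pair _ _ _ _ _).mpr ⟨1, 0, by ring, by ring⟩))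
  have haeq : a = a' := Nat.dvd_antisymm ha'a haa'
  have hbc : ((b : ℤ), (c : ℤ)) ∈ AddSubgroup.closure
      ({((a' : ℤ), 0), ((b' : ℤ), (c' : ℤ))} : Set (ℤ × ℤ)) :=
    (hmem _ _).mp ((mem_closure_pair _ _ _ _ _).mpr ⟨0, 1, by ring, by ring⟩)
  have hbc' : ((b' : ℤ), (c' : ℤ)) ∈ AddSubgroup.closure
      ({((a : ℤ), 0), ((b : ℤ), (c : ℤ))} : Set (ℤ × ℤ)) :=
    (hmem _ _).mpr ((mem_closure_pair _ _ _ _ _).mpr ⟨0, 1, by ring, by ring⟩)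
  rcases (mem_closure_pair _ _ _ _ _).mp hbc with ⟨m, n, h1, h2⟩
  rcases (mem_closure_pair _ _ _ _ _).mp hbc' with ⟨m', n', h1', h2'⟩
  have hcc' : (c' : ℤ) ∣ (c : ℤ) := ⟨n, by rw [mul_comm]; omega⟩
  have hc'c : (c : ℤ) ∣ (c' : ℤ) := ⟨n', by rw [mul_comm]; omega⟩
  have hceq : c = c' := Nat.dvd_antisymm (by exact_mod_cast hc'c) (by exact_mod_cast hcc')
  refine ⟨haeq, hceq, ?_⟩
  have hn1 : n = 1 := by
    have h2'' : n * (c' : ℤ) = (c' : ℤ) := by rw [h2]; exact_mod_cast hceq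
    have hcnz : (c' : ℤ) ≠ 0 := by exact_mod_cast hc'.ne'
    exact mul_right_cancel₀ hcnz (h2''.trans (one_mul (c' : ℤ)).symm)
  subst hn1
  have hma : m * (a' : ℤ) = (b : ℤ) - (b' : ℤ) := by omega
  have hbnd1 : (b : ℤ) < a' := by exact_mod_cast (haeq ▸ hb)
  have hbnd2 : (b' : ℤ) < a' := by exact_mod_cast hb'
  have hB1 : (0 : ℤ) ≤ (b : ℤ) := Int.ofNat_nonneg _
  have hB2 : (0 : ℤ) ≤ (b' : ℤ) := Int.ofNat_nonneg _
  have hapos : (0 : ℤ) < (a' : ℤ) := by exact_mod_cast ha'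
  have hm0 : m = 0 := by
    rcases lt_trichotomy m 0 with hx | hx | hx
    · nlinarith
    · exact hx
    · nlinarith
  subst hm0
  have : (b : ℤ) = (b' : ℤ) := by omega
  exact_mod_cast this

/-- For every positive integer `d`, the set of subgroups of `ℤ × ℤ` of index `d`
is finite and has cardinality `σ(d) = ∑_{r ∣ d} r`. -/
theorem index_d_subgroups_of_Z2_card (d : ℕ) (hd : 0 < d) :
    {H : AddSubgroup (ℤ × ℤ) | H.index = d}.Finite ∧
    {H : AddSubgroup (ℤ × ℤ) | H.index = d}.ncard = ∑ r ∈ d.divisors, r := by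
  classical
  set S : Finset ((ℕ × ℕ) × ℕ) :=
    (d.divisorsAntidiagonal ×ˢ Finset.range d).filter (fun t => t.2 < t.1.1) with hSdef
  set Φ : ((ℕ × ℕ) × ℕ) → AddSubgroup (ℤ × ℤ) := fun t =>
    AddSubgroup.closure ({((t.1.1 : ℤ), 0), ((t.2 : ℤ), (t.1.2 : ℤ))} : Set (ℤ × ℤ)) with hΦdef
  have hSmem : ∀ t : (ℕ × ℕ) × ℕ, t ∈ S ↔ t.1.1 * t.1.2 = d ∧ 0 < t.1.1 ∧ 0 < t.1.2 ∧
      t.2 < t.1.1 := by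
    rintro ⟨⟨a, c⟩, b⟩
    simp only [hSdef, Finset.mem_filter, Finset.mem_product, Nat.mem_divisorsAntidiagonal,
      Finset.mem_range]
    constructor
    · rintro ⟨⟨⟨hac, hdne⟩, _⟩, hb⟩
      have hA : 0 < a := by
        rcases Nat.eq_zero_or_pos a with h | h
        · subst h; omega
        · exact h
      have hC : 0 < c := by
        rcases Nat.eq_zero_or_pos c with h | h
        · subst h; omega
        · exact h
      exact ⟨hac, hA, hC, hb⟩
    · rintro ⟨hac, hA, hC, hb⟩
      refine ⟨⟨⟨hac, hd.ne'⟩, ?_⟩, hb⟩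
      calc b < a := hb
        _ ≤ a * c := Nat.le_mul_of_pos_right a hC
        _ = d := hac
  have hbij : Set.BijOn Φ ↑S {H : AddSubgroup (ℤ × ℤ) | H.index = d} := by
    refine ⟨?_, ?_, ?_⟩
    · rintro ⟨⟨a, c⟩, b⟩ ht
      rw [Finset.mem_coe, hSmem] at ht
      obtain ⟨hac, hA, hC, hb⟩ := ht
      simp only [Set.mem_setOf_eq, hΦdef]
      rw [index_closure_pair a c b hA hC]
      exact hac
    · rintro ⟨⟨a, c⟩, b⟩ ht ⟨⟨a', c'⟩, b'⟩ ht' heq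
      rw [Finset.mem_coe, hSmem] at ht ht'
      obtain ⟨hac, hA, hC, hb⟩ := ht
      obtain ⟨hac', hA', hC', hb'⟩ := ht'
      obtain ⟨e1, e2, e3⟩ := params_unique a c b a' c' b' hA hC hb hA' hC' hb' heq
      simp [e1, e2, e3]
    · rintro H hH
      simp only [Set.mem_setOf_eq] at hH
      obtain ⟨a, c, b, hA, hC, hb, rfl⟩ := exists_params H (by omega)
      rw [index_closure_pair a c b hA hC] at hH
      refine ⟨((a, c), b), ?_, rfl⟩
      rw [Finset.mem_coe, hSmem]
      exact ⟨hH, hA, hC, hb⟩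
  have himg : {H : AddSubgroup (ℤ × ℤ) | H.index = d} = Φ '' ↑S := hbij.image_eq.symm
  constructor
  · rw [himg]
    exact (S.finite_toSet).image Φ
  · rw [himg, Set.ncard_image_of_injOn hbij.injOn, Set.ncard_coe_finset]
    have hcardS : S.card = ∑ p ∈ d.divisorsAntidiagonal, p.1 := by
      rw [hSdef, Finset.card_filter, Finset.sum_product]
      refine Finset.sum_congr rfl ?_
      intro p hp
      rw [Nat.mem_divisorsAntidiagonal] at hp
      have hp1 : p.1 ≤ d := Nat.le_of_dvd hd ⟨p.2, hp.1.symm⟩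
      have hfil : Finset.filter (fun b => b < p.1) (Finset.range d) = Finset.range p.1 := by
        ext x
        simp only [Finset.mem_filter, Finset.mem_range]
        omega
      calc (∑ b ∈ Finset.range d, if b < p.1 then 1 else 0)
          = (Finset.filter (fun b => b < p.1) (Finset.range d)).card := by
            rw [Finset.card_filter]
        _ = p.1 := by rw [hfil, Finset.card_range]
    rw [hcardS]
    exact Nat.sum_divisorsAntidiagonal (fun i _ => i)
end

section
/- Let k be a field, let W be a finite-dimensional k-vector space of dimension d, let Θ : W → W be a linear automorphism (a linear equivalence of W with itself), let λ : W → k be a linear functional, and let κ ∈ W satisfy λ(κ) ≠ 0. Then for every natural number n there exists a natural number m with n ≤ m < n + d such that λ(Θ^m(κ)) ≠ 0. In particular, the set {m ∈ ℕ : λ(Θ^m(κ)) ≠ 0} is infinite. -/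
/-- If `W` is a `d`-dimensional vector space, `Θ` a linear automorphism of `W`,
`l` a linear functional, and `l κ ≠ 0`, then every window of `d` consecutive
exponents contains some `m` with `l (Θ^m κ) ≠ 0`; in particular the set of such
`m` is infinite. -/
theorem nonzero_in_every_window (k : Type*) [Field k] (W : Type*) [AddCommGroup W]
    [Module k W] [FiniteDimensional k W] (Θ : W ≃ₗ[k] W) (l : W →ₗ[k] k) (κ : W)
    (hκ : l κ ≠ 0) :
    (∀ n : ℕ, ∃ m : ℕ, n ≤ m ∧ m < n + Module.finrank k W ∧ l ((Θ ^ m) κ) ≠ 0) ∧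
    {m : ℕ | l ((Θ ^ m) κ) ≠ 0}.Infinite := by
  set d := Module.finrank k W with hd
  set f := Θ.toLinearMap with hf
  -- the scalar sequence
  set g : ℕ → k := fun m => l ((Θ ^ m) κ) with hg
  have hpow : ∀ m : ℕ, (Θ ^ m) κ = (f ^ m) κ := by
    intro m
    rw [LinearEquiv.pow_apply, Module.End.pow_apply]
    rfl
  -- characteristic polynomial facts
  have hmon := f.charpoly_monic
  have hdeg : f.charpoly.natDegree = d := f.charpoly_natDegree
  have haev : Polynomial.aeval f f.charpoly = 0 := f.aeval_self_charpoly
  have hc0 : f.charpoly.coeff 0 ≠ 0 := by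
    have hdet : LinearMap.det f ≠ 0 := IsUnit.ne_zero Θ.isUnit_det'
    intro h
    rw [f.det_eq_sign_charpoly_coeff, h, mul_zero] at hdet
    exact hdet rfl
  have hdpos : 0 < d := by
    rcases Nat.eq_zero_or_pos d with h | h
    · exfalso
      have : κ = 0 := by
        have := Module.finrank_zero_iff (R := k) (M := W)
        rw [hd] at h
        exact (this.mp h).elim κ 0
      exact hκ (by simp [this])
    · exact h
  -- the linear recurrence coming from Cayley–Hamilton
  have hrec : ∀ m : ℕ, ∑ i ∈ Finset.range (d + 1), f.charpoly.coeff i * g (m + i) = 0 := by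
    intro m
    have h1 : Polynomial.aeval f f.charpoly =
        ∑ i ∈ Finset.range (d + 1), f.charpoly.coeff i • f ^ i := by
      rw [Polynomial.aeval_eq_sum_range' (n := d + 1) (by rw [hdeg]; exact Nat.lt_succ_self d)]
    have h2 : (∑ i ∈ Finset.range (d + 1), f.charpoly.coeff i • f ^ i) ((f ^ m) κ) = 0 := by
      rw [← h1, haev]; rfl
    have h3 : ∑ i ∈ Finset.range (d + 1), f.charpoly.coeff i • ((f ^ (m + i)) κ) = 0 := by
      rw [← h2]
      rw [LinearMap.sum_apply]
      refine Finset.sum_congr rfl fun i _ => ?_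
      rw [LinearMap.smul_apply]
      congr 1
      rw [add_comm m i, pow_add, Module.End.mul_apply]
    calc ∑ i ∈ Finset.range (d + 1), f.charpoly.coeff i * g (m + i)
        = l (∑ i ∈ Finset.range (d + 1), f.charpoly.coeff i • ((f ^ (m + i)) κ)) := by
          rw [map_sum]
          refine Finset.sum_congr rfl fun i _ => ?_
          rw [map_smul, smul_eq_mul]
          show f.charpoly.coeff i * l ((Θ ^ (m + i)) κ) = _
          rw [hpow]
      _ = 0 := by rw [h3, map_zero]
  -- main claim: a window of d zeros cannot exist
  have key : ∀ n : ℕ, ∃ m : ℕ, n ≤ m ∧ m < n + d ∧ g m ≠ 0 := by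
    intro n
    by_contra hcon
    push_neg at hcon
    -- all entries in the window [n, n+d) vanish
    have hwin : ∀ i, i < d → g (n + i) = 0 := by
      intro i hi
      exact hcon (n + i) (Nat.le_add_right n i) (by omega)
    -- propagate the window of zeros downwards
    have step : ∀ j : ℕ, (∀ i, i < d → g (j + 1 + i) = 0) → (∀ i, i < d → g (j + i) = 0) := by
      intro j hj i hi
      rcases Nat.eq_zero_or_pos i with rfl | hipos
      · -- use the recurrence at m = j
        have h0 := hrec j
        have hsplit : ∑ i ∈ Finset.range (d + 1), f.charpoly.coeff i * g (j + i)
            = f.charpoly.coeff 0 * g (j + 0)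
              + ∑ i ∈ Finset.range d, f.charpoly.coeff (i + 1) * g (j + (i + 1)) := by
          rw [Finset.sum_range_succ', add_comm]
        have hz : ∀ i ∈ Finset.range d, f.charpoly.coeff (i + 1) * g (j + (i + 1)) = 0 := by
          intro i hi'
          have : g (j + 1 + i) = 0 := hj i (Finset.mem_range.mp hi')
          have he : j + (i + 1) = j + 1 + i := by omega
          rw [he, this, mul_zero]
        rw [hsplit, Finset.sum_congr rfl hz, Finset.sum_const_zero, add_zero] at h0
        have := mul_eq_zero.mp h0
        rcases this with h | h
        · exact absurd h hc0
        · simpa using h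
      · have he : j + i = j + 1 + (i - 1) := by omega
        rw [he]
        exact hj (i - 1) (by omega)
    have down : ∀ t : ℕ, ∀ i, i < d → g (n - t + i) = 0 := by
      intro t
      induction t with
      | zero => simpa using hwin
      | succ t ih =>
        rcases le_or_gt (t + 1) n with hle | hlt
        · have he : n - t = n - (t + 1) + 1 := by omega
          rw [he] at ih
          exact step _ ih
        · have he : n - (t + 1) = n - t := by omega
          rw [he]
          exact ih
    have h00 : g 0 = 0 := by
      have := down n 0 hdpos
      simpa using this
    have : l κ = 0 := by simpa [hg] using h00
    exact hκ this
  refine ⟨key, ?_⟩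
  intro hfin
  obtain ⟨N, hN⟩ := hfin.bddAbove
  obtain ⟨m, hm1, _, hm3⟩ := key (N + 1)
  have : m ≤ N := hN hm3
  omega
end
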